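/- Let A be a local commutative ring and let p be a prime ideal of A such that the localization map A → A_p is injective. Assume that every finitely generated ideal I of A with I ⊄ p is generated by a single non-zerodivisor. Then: (a) the maximal ideal p·A_p of the local ring A_p is contained in the image of A in A_p; and (b) the image of A under the composite A → A_p → κ(p), where κ(p) is the residue field of A_p, is a valuation subring of κ(p), i.e. for every nonzero element z of κ(p), either z or z^{-1} lies in this image. -/

import Mathlib

open IsLocalization

/-- Key decomposition: for `a : A` and `s ∉ p`, writing `(a,s) = (c)` and cancelling `c`,
we get `a = c*u`, `s = c*v` with `α*u + β*v = 1` and `c ∉ p`. -/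
lemma semival_aux {A : Type*} [CommRing A] (p : Ideal A) [p.IsPrime]
    (hprin : ∀ I : Ideal A, I.FG → ¬ I ≤ p →
      ∃ a ∈ nonZeroDivisors A, I = Ideal.span {a})
    (a s : A) (hs : s ∉ p) :
    ∃ c u v α β : A, a = c * u ∧ s = c * v ∧ α * u + β * v = 1 ∧ c ∉ p := by
  obtain ⟨c, hc, hcspan⟩ := hprin (Ideal.span {a, s})
    (Submodule.fg_span (Set.toFinite _))
    (fun hle => hs (hle (Ideal.subset_span (by simp))))
  have ha : a ∈ Ideal.span ({c} : Set A) := hcspan ▸ Ideal.subset_span (by simp)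
  have hsm : s ∈ Ideal.span ({c} : Set A) := hcspan ▸ Ideal.subset_span (by simp)
  obtain ⟨u, hu⟩ := Ideal.mem_span_singleton'.mp ha
  obtain ⟨v, hv⟩ := Ideal.mem_span_singleton'.mp hsm
  have hcmem : c ∈ Ideal.span ({a, s} : Set A) := hcspan ▸ Ideal.subset_span rfl
  obtain ⟨α, β, hαβ⟩ := Ideal.mem_span_pair.mp hcmem
  refine ⟨c, u, v, α, β, by rw [← hu]; ring, by rw [← hv]; ring, ?_, ?_⟩
  · -- cancel c
    have h2 : c * (α * u + β * v) = c * 1 := by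
      rw [mul_one]
      calc c * (α * u + β * v) = α * (u * c) + β * (v * c) := by ring
        _ = c := by rw [hu, hv, hαβ]
    exact mul_cancel_left_mem_nonZeroDivisors hc |>.mp h2
  · intro hcp
    exact hs (by rw [← hv]; exact Ideal.mul_mem_left _ v hcp)

theorem local_prufer_pair_is_semivaluation
    {A : Type*} [CommRing A] [IsLocalRing A] (p : Ideal A) [p.IsPrime]
    (hinj : Function.Injective (algebraMap A (Localization.AtPrime p)))
    (hprin : ∀ I : Ideal A, I.FG → ¬ I ≤ p →
      ∃ a ∈ nonZeroDivisors A, I = Ideal.span {a}) :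
    (∀ x ∈ IsLocalRing.maximalIdeal (Localization.AtPrime p),
        x ∈ Set.range (algebraMap A (Localization.AtPrime p))) ∧
    (∀ z : IsLocalRing.ResidueField (Localization.AtPrime p), z ≠ 0 →
        (z ∈ Set.range ((IsLocalRing.residue (Localization.AtPrime p)).comp
          (algebraMap A (Localization.AtPrime p))) ∨
        z⁻¹ ∈ Set.range ((IsLocalRing.residue (Localization.AtPrime p)).comp
          (algebraMap A (Localization.AtPrime p))))) := by
  constructor
  · intro x hx
    obtain ⟨⟨a, s⟩, rfl⟩ := IsLocalization.mk'_surjective p.primeCompl x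
    have ha : a ∈ p := (IsLocalization.AtPrime.mk'_mem_maximal_iff _ p a s).mp hx
    obtain ⟨c, u, v, α, β, hau, hsv, h1, hcp⟩ := semival_aux p hprin a s s.2
    -- u ∈ p since a = c*u, c ∉ p
    have hup : u ∈ p := ((Ideal.IsPrime.mem_or_mem ‹p.IsPrime› (hau ▸ ha)).resolve_left hcp)
    -- α*u ∈ maximal ideal of A, so β*v is a unit, so v is a unit
    have hvunit : IsUnit v := by
      rcases IsLocalRing.isUnit_or_isUnit_of_add_one h1 with h | h
      · exact absurd (isUnit_of_mul_isUnit_right h)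
          (fun hu' => ‹p.IsPrime›.ne_top (p.eq_top_of_isUnit_mem hup hu'))
      · exact isUnit_of_mul_isUnit_right h
    obtain ⟨w, hw⟩ := hvunit.exists_right_inv
    refine ⟨u * w, ?_⟩
    rw [IsLocalization.eq_mk'_iff_mul_eq, ← map_mul]
    congr 1
    calc u * w * ↑s = u * w * (c * v) := by rw [hsv]
      _ = c * u * (v * w) := by ring
      _ = a := by rw [hw, mul_one, hau]
  · intro z hz
    obtain ⟨x, rfl⟩ := Ideal.Quotient.mk_surjective z
    obtain ⟨⟨a, s⟩, rfl⟩ := IsLocalization.mk'_surjective p.primeCompl x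
    have hxnm : IsLocalization.mk' (Localization.AtPrime p) a s ∉
        IsLocalRing.maximalIdeal (Localization.AtPrime p) := by
      intro h
      exact hz (Ideal.Quotient.eq_zero_iff_mem.mpr h)
    have hap : a ∉ p := fun h => hxnm
      ((IsLocalization.AtPrime.mk'_mem_maximal_iff _ p a s).mpr h)
    obtain ⟨c, u, v, α, β, hau, hsv, h1, hcp⟩ := semival_aux p hprin a s s.2
    have hup : u ∉ p := fun h => hap (hau ▸ Ideal.mul_mem_left _ _ h)
    rcases IsLocalRing.isUnit_or_isUnit_of_add_one h1 with h | h
    · -- u is a unit, so x⁻¹ = v * u⁻¹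
      have huu : IsUnit u := isUnit_of_mul_isUnit_right h
      obtain ⟨w, hw⟩ := huu.exists_right_inv
      right
      refine ⟨v * w, ?_⟩
      have hmul : IsLocalization.mk' (Localization.AtPrime p) a s *
          algebraMap A (Localization.AtPrime p) (v * w) = 1 := by
        rw [← IsLocalization.mk'_one (M := p.primeCompl) (Localization.AtPrime p) (v*w),
          ← IsLocalization.mk'_mul]
        have hkey : a * (v * w) = ↑(s * 1) := by
          push_cast
          calc a * (v * w) = c * u * (v * w) := by rw [hau]
            _ = c * v * (u * w) := by ring
            _ = ↑s * 1 := by rw [hsv, hw]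
        rw [hkey, IsLocalization.mk'_self]
      have : (IsLocalRing.residue (Localization.AtPrime p)
            (IsLocalization.mk' (Localization.AtPrime p) a s)) *
          (IsLocalRing.residue (Localization.AtPrime p)
            (algebraMap A (Localization.AtPrime p) (v * w))) = 1 := by
        rw [← map_mul, hmul, map_one]
      exact (inv_eq_of_mul_eq_one_right this).symm
    · -- v is a unit, so x = u * v⁻¹
      have hvu : IsUnit v := isUnit_of_mul_isUnit_right h
      obtain ⟨w, hw⟩ := hvu.exists_right_inv
      left
      refine ⟨u * w, ?_⟩
      have : algebraMap A (Localization.AtPrime p) (u * w) =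
          IsLocalization.mk' (Localization.AtPrime p) a s := by
        rw [IsLocalization.eq_mk'_iff_mul_eq, ← map_mul]
        congr 1
        calc u * w * ↑s = u * w * (c * v) := by rw [hsv]
          _ = c * u * (v * w) := by ring
          _ = a := by rw [hw, mul_one, hau]
      show IsLocalRing.residue _ (algebraMap A (Localization.AtPrime p) (u * w)) = _
      rw [this]
      rfl
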